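/- Let T be an n-dimensional real inner product space with inner product J, g = W*JW with W positive self-adjoint and tr W = 1. Then R(x, X) := ‖W(x)‖²‖X‖² − 2⟨X, W(x)⟩ + 1 ≥ 0 for all x ∈ T and X ∈ T*, and the infimum of ∫∫ g(x,x)‖X‖² dp over probability measures p on T × T* satisfying the local unbiasedness constraint ∫∫ ⟨X, a(x)⟩ dp = tr a for all a ∈ End(T) equals 1. -/

import Mathlib

open scoped InnerProductSpace
open MeasureTheory

lemma my_trace_eq_sum_inner {E : Type*} [NormedAddCommGroup E] [InnerProductSpace ℝ E]
    [FiniteDimensional ℝ E] {ι : Type*} [Fintype ι] [DecidableEq ι]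
    (b : OrthonormalBasis ι ℝ E) (a : Module.End ℝ E) :
    LinearMap.trace ℝ E a = ∑ i, ⟪b i, a (b i)⟫_ℝ := by
  rw [LinearMap.trace_eq_matrix_trace ℝ b.toBasis, Matrix.trace]
  congr 1
  ext i
  rw [Matrix.diag_apply, LinearMap.toMatrix_apply, OrthonormalBasis.coe_toBasis,
    OrthonormalBasis.coe_toBasis_repr_apply, OrthonormalBasis.repr_apply_apply]

lemma my_integrable_dirac {α E : Type*} [MeasurableSpace α] [MeasurableSingletonClass α]
    [NormedAddCommGroup E] {f : α → E} (hf : StronglyMeasurable f) (a : α) :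
    Integrable f (Measure.dirac a) := by
  refine ⟨hf.aestronglyMeasurable, ?_⟩
  rw [HasFiniteIntegral, lintegral_dirac]
  exact ENNReal.coe_lt_top

/-- `T` an `n`-dimensional real inner product space (inner product
`J`, identifying `T*` with `T`), `g = W*JW` (so `g(x,x) = ⟪W x, W x⟫`) with `W`
positive self-adjoint and `tr W = 1`.  Then
`R(x,X) = ‖W x‖²‖X‖² − 2⟨X, W x⟩ + 1 ≥ 0` for all `x ∈ T`, `X ∈ T*`, and the
infimum of the deviation `∫∫ g(x,x)‖X‖² dp` over locally unbiased probability
measures `p` on `T × T*` equals `1`. -/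
theorem stmt13 {T : Type*} [NormedAddCommGroup T] [InnerProductSpace ℝ T]
    [FiniteDimensional ℝ T] [MeasurableSpace T] [BorelSpace T]
    (W : Module.End ℝ T)
    (hWsa : ∀ u v : T, ⟪W u, v⟫_ℝ = ⟪u, W v⟫_ℝ)
    (hWpos : ∀ u : T, u ≠ 0 → 0 < ⟪W u, u⟫_ℝ)
    (htrW : LinearMap.trace ℝ T W = 1) :
    (∀ x X : T, 0 ≤ ‖W x‖ ^ 2 * ‖X‖ ^ 2 - 2 * ⟪X, W x⟫_ℝ + 1) ∧
    sInf {r : ℝ | ∃ p : Measure (T × T), IsProbabilityMeasure p ∧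
      Integrable (fun z : T × T => ⟪W z.1, W z.1⟫_ℝ * ‖z.2‖ ^ 2) p ∧
      (∀ a : Module.End ℝ T,
        Integrable (fun z : T × T => ⟪z.2, a z.1⟫_ℝ) p) ∧
      (∀ a : Module.End ℝ T,
        ∫ z, ⟪z.2, a z.1⟫_ℝ ∂p = LinearMap.trace ℝ T a) ∧
      r = ∫ z, ⟪W z.1, W z.1⟫_ℝ * ‖z.2‖ ^ 2 ∂p} = 1 := by
  have part1 : ∀ x X : T, 0 ≤ ‖W x‖ ^ 2 * ‖X‖ ^ 2 - 2 * ⟪X, W x⟫_ℝ + 1 := by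
    intro x X
    nlinarith [real_inner_le_norm X (W x), sq_nonneg (‖W x‖ * ‖X‖ - 1),
      norm_nonneg (W x), norm_nonneg X]
  refine ⟨part1, ?_⟩
  -- lower bound
  have hlb : ∀ r ∈ {r : ℝ | ∃ p : Measure (T × T), IsProbabilityMeasure p ∧
      Integrable (fun z : T × T => ⟪W z.1, W z.1⟫_ℝ * ‖z.2‖ ^ 2) p ∧
      (∀ a : Module.End ℝ T,
        Integrable (fun z : T × T => ⟪z.2, a z.1⟫_ℝ) p) ∧
      (∀ a : Module.End ℝ T,
        ∫ z, ⟪z.2, a z.1⟫_ℝ ∂p = LinearMap.trace ℝ T a) ∧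
      r = ∫ z, ⟪W z.1, W z.1⟫_ℝ * ‖z.2‖ ^ 2 ∂p}, 1 ≤ r := by
    rintro r ⟨p, hp, hg, hia, hca, rfl⟩
    have h1 : Integrable (fun z : T × T => ⟪z.2, W z.1⟫_ℝ) p := hia W
    have h2 : ∫ z, ⟪z.2, W z.1⟫_ℝ ∂p = 1 := by rw [hca W, htrW]
    have hmono : ∫ zz, 2 * ⟪zz.2, W zz.1⟫_ℝ ∂p
        ≤ ∫ zz, (⟪W zz.1, W zz.1⟫_ℝ * ‖zz.2‖ ^ 2 + 1) ∂p := by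
      refine integral_mono ((hia W).const_mul 2) (hg.add (integrable_const 1)) fun zz => ?_
      have := part1 zz.1 zz.2
      rw [real_inner_self_eq_norm_sq]
      linarith
    rw [integral_const_mul, h2, mul_one,
      integral_add hg (integrable_const 1), integral_const, probReal_univ] at hmono
    simp only [smul_eq_mul, mul_one] at hmono
    linarith
  -- construction of the optimal measure
  have hT : W.IsSymmetric := hWsa
  set n := Module.finrank ℝ T with hn
  have hfr : Module.finrank ℝ T = n := rfl
  set b := hT.eigenvectorBasis hfr with hb
  set μ := hT.eigenvalues hfr with hμ
  have hWb : ∀ i, W (b i) = μ i • b i := fun i => hT.apply_eigenvectorBasis hfr i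
  have hbnorm : ∀ i, ‖b i‖ = 1 := fun i => b.orthonormal.1 i
  have hμpos : ∀ i, 0 < μ i := by
    intro i
    have h := hWpos (b i) (b.toBasis.ne_zero i)
    rwa [hWb i, real_inner_smul_left, real_inner_self_eq_norm_sq, hbnorm i,
      one_pow, mul_one] at h
  have htr : ∀ a : Module.End ℝ T, LinearMap.trace ℝ T a = ∑ i, ⟪b i, a (b i)⟫_ℝ :=
    fun a => my_trace_eq_sum_inner b a
  have hμsum : ∑ i, μ i = 1 := by
    rw [← htrW, htr W]
    refine Finset.sum_congr rfl fun i _ => ?_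
    rw [hWb i, real_inner_smul_right, real_inner_self_eq_norm_sq, hbnorm i]
    ring
  -- the measure
  set z : Fin n → T × T := fun i => ((μ i)⁻¹ • b i, b i) with hz
  set p : Measure (T × T) := ∑ i, ENNReal.ofReal (μ i) • Measure.dirac (z i) with hp
  have hWcont : Continuous W := W.continuous_of_finiteDimensional
  have hf1cont : Continuous (fun z : T × T => ⟪W z.1, W z.1⟫_ℝ * ‖z.2‖ ^ 2) :=
    ((hWcont.comp continuous_fst).inner (hWcont.comp continuous_fst)).mul
      (continuous_snd.norm.pow 2)
  have hf2cont : ∀ a : Module.End ℝ T,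
      Continuous (fun z : T × T => ⟪z.2, a z.1⟫_ℝ) := fun a =>
    continuous_snd.inner ((a.continuous_of_finiteDimensional).comp continuous_fst)
  have hint : ∀ (f : T × T → ℝ), Continuous f → Integrable f p := by
    intro f hf
    rw [hp]
    refine integrable_finset_sum_measure.2 fun i _ => ?_
    exact (my_integrable_dirac hf.stronglyMeasurable (z i)).smul_measure ENNReal.ofReal_ne_top
  have hintegral : ∀ (f : T × T → ℝ), Continuous f →
      ∫ w, f w ∂p = ∑ i, μ i * f (z i) := by
    intro f hf
    rw [hp, integral_finset_sum_measure (fun i _ =>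
      (my_integrable_dirac hf.stronglyMeasurable (z i)).smul_measure ENNReal.ofReal_ne_top)]
    refine Finset.sum_congr rfl fun i _ => ?_
    rw [integral_smul_measure, integral_dirac, ENNReal.toReal_ofReal (hμpos i).le,
      smul_eq_mul]
  have hprob : IsProbabilityMeasure p := by
    constructor
    rw [hp]
    simp only [Measure.coe_finset_sum, Finset.sum_apply, Measure.smul_apply,
      Measure.dirac_apply_of_mem (Set.mem_univ _), smul_eq_mul, mul_one]
    rw [← ENNReal.ofReal_sum_of_nonneg (fun i _ => (hμpos i).le), hμsum,
      ENNReal.ofReal_one]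
  have hWz : ∀ i, W ((μ i)⁻¹ • b i) = b i := by
    intro i
    rw [W.map_smul, hWb i, smul_smul, inv_mul_cancel₀ (hμpos i).ne', one_smul]
  have hmem : (1 : ℝ) ∈ {r : ℝ | ∃ p : Measure (T × T), IsProbabilityMeasure p ∧
      Integrable (fun z : T × T => ⟪W z.1, W z.1⟫_ℝ * ‖z.2‖ ^ 2) p ∧
      (∀ a : Module.End ℝ T,
        Integrable (fun z : T × T => ⟪z.2, a z.1⟫_ℝ) p) ∧
      (∀ a : Module.End ℝ T,
        ∫ z, ⟪z.2, a z.1⟫_ℝ ∂p = LinearMap.trace ℝ T a) ∧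
      r = ∫ z, ⟪W z.1, W z.1⟫_ℝ * ‖z.2‖ ^ 2 ∂p} := by
    refine ⟨p, hprob, hint _ hf1cont, fun a => hint _ (hf2cont a), fun a => ?_, ?_⟩
    · rw [hintegral _ (hf2cont a), htr a]
      refine Finset.sum_congr rfl fun i _ => ?_
      simp only [hz]
      rw [a.map_smul, real_inner_smul_right, ← mul_assoc,
        mul_inv_cancel₀ (hμpos i).ne', one_mul]
    · rw [hintegral _ hf1cont]
      rw [← hμsum]
      refine Finset.sum_congr rfl fun i _ => ?_
      simp only [hz]
      rw [hWz i, real_inner_self_eq_norm_sq, hbnorm i]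
      ring
  exact le_antisymm (csInf_le ⟨1, hlb⟩ hmem) (le_csInf ⟨1, hmem⟩ hlb)
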